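/- Let ε and λ be real numbers, and define c(t) := 1 − 8ε·sin(2λt) − 16ε²·sin⁴(λt) and w(t) := sin(λt)·exp(2ελt − ε·sin(2λt)) for t ∈ ℝ. Then w is twice differentiable and satisfies w''(t) + λ²·c(t)·w(t) = 0 for every t ∈ ℝ. -/

import Mathlib

open Real

theorem resonant_growth_example (ε lam : ℝ) (c w : ℝ → ℝ)
    (hc : ∀ t, c t = 1 - 8 * ε * Real.sin (2 * lam * t)
        - 16 * ε ^ 2 * Real.sin (lam * t) ^ 4)
    (hw : ∀ t, w t = Real.sin (lam * t) *
        Real.exp (2 * ε * lam * t - ε * Real.sin (2 * lam * t))) :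
    ∃ w' w'' : ℝ → ℝ,
      (∀ t, HasDerivAt w (w' t) t) ∧
      (∀ t, HasDerivAt w' (w'' t) t) ∧
      (∀ t, w'' t + lam ^ 2 * c t * w t = 0) := by
  have hwf : w = fun t => Real.sin (lam * t) *
      Real.exp (2 * ε * lam * t - ε * Real.sin (2 * lam * t)) := funext hw
  have hlin : ∀ (a t : ℝ), HasDerivAt (fun x : ℝ => a * x) a t := by
    intro a t; simpa using (hasDerivAt_id t).const_mul a
  refine ⟨fun t => (lam * Real.cos (lam * t) + 4 * ε * lam * Real.sin (lam * t) ^ 3) *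
      Real.exp (2 * ε * lam * t - ε * Real.sin (2 * lam * t)),
    fun t => lam ^ 2 * (-Real.sin (lam * t) + 16 * ε * Real.sin (lam * t) ^ 2 * Real.cos (lam * t)
      + 16 * ε ^ 2 * Real.sin (lam * t) ^ 5) *
      Real.exp (2 * ε * lam * t - ε * Real.sin (2 * lam * t)), ?_, ?_, ?_⟩
  · intro t
    rw [hwf]
    have hs : HasDerivAt (fun t : ℝ => Real.sin (lam * t)) (Real.cos (lam * t) * lam) t := by
      exact (Real.hasDerivAt_sin (lam * t)).comp t (hlin lam t)
    have hs2 : HasDerivAt (fun t : ℝ => Real.sin (2 * lam * t))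
        (Real.cos (2 * lam * t) * (2 * lam)) t := by
      exact (Real.hasDerivAt_sin (2 * lam * t)).comp t (hlin (2 * lam) t)
    have hφ : HasDerivAt (fun t : ℝ => 2 * ε * lam * t - ε * Real.sin (2 * lam * t))
        (2 * ε * lam - ε * (Real.cos (2 * lam * t) * (2 * lam))) t :=
      (hlin (2 * ε * lam) t).sub (hs2.const_mul ε)
    have := hs.mul hφ.exp
    refine this.congr_deriv ?_
    have h2 : Real.cos (2 * lam * t) = 1 - 2 * Real.sin (lam * t) ^ 2 := by
      rw [show (2 : ℝ) * lam * t = 2 * (lam * t) by ring, Real.cos_two_mul']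
      have := Real.sin_sq_add_cos_sq (lam * t)
      linarith
    rw [h2]; ring
  · intro t
    have hs : HasDerivAt (fun t : ℝ => Real.sin (lam * t)) (Real.cos (lam * t) * lam) t := by
      exact (Real.hasDerivAt_sin (lam * t)).comp t (hlin lam t)
    have hcos : HasDerivAt (fun t : ℝ => Real.cos (lam * t)) (-Real.sin (lam * t) * lam) t := by
      exact (Real.hasDerivAt_cos (lam * t)).comp t (hlin lam t)
    have hs2 : HasDerivAt (fun t : ℝ => Real.sin (2 * lam * t))
        (Real.cos (2 * lam * t) * (2 * lam)) t := by
      exact (Real.hasDerivAt_sin (2 * lam * t)).comp t (hlin (2 * lam) t)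
    have hφ : HasDerivAt (fun t : ℝ => 2 * ε * lam * t - ε * Real.sin (2 * lam * t))
        (2 * ε * lam - ε * (Real.cos (2 * lam * t) * (2 * lam))) t :=
      (hlin (2 * ε * lam) t).sub (hs2.const_mul ε)
    have hA : HasDerivAt (fun t : ℝ => lam * Real.cos (lam * t)
        + 4 * ε * lam * Real.sin (lam * t) ^ 3)
        (lam * (-Real.sin (lam * t) * lam)
          + 4 * ε * lam * (3 * Real.sin (lam * t) ^ 2 * (Real.cos (lam * t) * lam))) t := by
      have := (hcos.const_mul lam).add ((hs.pow 3).const_mul (4 * ε * lam))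
      refine this.congr_deriv (by norm_num)
    have := hA.mul hφ.exp
    refine this.congr_deriv ?_
    have h2 : Real.cos (2 * lam * t) = 1 - 2 * Real.sin (lam * t) ^ 2 := by
      rw [show (2 : ℝ) * lam * t = 2 * (lam * t) by ring, Real.cos_two_mul']
      have := Real.sin_sq_add_cos_sq (lam * t)
      linarith
    rw [h2]; ring
  · intro t
    have h2 : Real.sin (2 * lam * t) = 2 * Real.sin (lam * t) * Real.cos (lam * t) := by
      rw [show (2 : ℝ) * lam * t = 2 * (lam * t) by ring, Real.sin_two_mul]
    simp only [hc, hw, h2]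
    ring
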